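/- Let S := {p ∈ ℕ | p prime} and T := {n ∈ ℕ | n ≡ 1 (mod 4)}. Then M(S ∩ T) is not a subset of M(S) ∩ M(T); that is, the inclusion M(S ∩ T) ⊆ M(S) ∩ M(T) fails in general. -/
import Mathlib

/-- `Subseq x y` means the decimal digit string of `x` is a subsequence of that of `y`. -/
def Subseq (x y : ℕ) : Prop := (Nat.digits 10 x).Sublist (Nat.digits 10 y)

/-- The minimal set of `S`: elements of `S` containing no smaller element of `S`
as a subsequence of their decimal digits. -/
def minimalSet (S : Set ℕ) : Set ℕ := {s ∈ S | ¬ ∃ n ∈ S, n < s ∧ Subseq n s}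

theorem minimalSet_inter_not_subset_inter :
    ¬ minimalSet ({p : ℕ | p.Prime} ∩ {n : ℕ | n % 4 = 1}) ⊆
        minimalSet {p : ℕ | p.Prime} ∩ minimalSet {n : ℕ | n % 4 = 1} := by
  intro h
  have h13 : (13 : ℕ) ∈ minimalSet ({p : ℕ | p.Prime} ∩ {n : ℕ | n % 4 = 1}) := by
    refine ⟨⟨by norm_num, by norm_num⟩, ?_⟩
    rintro ⟨n, ⟨hp, hm⟩, hlt, hs⟩
    simp only [Set.mem_setOf_eq] at hp hm
    unfold Subseq at hs
    interval_cases n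
    all_goals try { exfalso; revert hp; norm_num }
    all_goals try { omega }
    rw [show Nat.digits 10 5 = [5] by simp,
        show Nat.digits 10 13 = [3, 1] by simp] at hs
    exact (by decide : ¬ [5].Sublist [3, 1]) hs
  have := (h h13).1.2
  refine this ⟨3, by norm_num, by norm_num, ?_⟩
  show (Nat.digits 10 3).Sublist (Nat.digits 10 13)
  rw [show Nat.digits 10 3 = [3] by simp,
      show Nat.digits 10 13 = [3, 1] by simp]
  decide
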